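/- For any 0-homogeneous tree language L, the bottom-up quotient automaton A_L recognizes L: L(A_L) = L. Moreover, for every tree t, the run of A_L on t yields exactly the singleton {t⁻¹(L)}. -/

import Mathlib

inductive GTree (S : Type) (ar : S → ℕ) : Type where
  | eps (x : ℕ) : GTree S ar
  | node (f : S) (ts : Fin (ar f) → GTree S ar) : GTree S ar

namespace GTree

variable {S : Type} {ar : S → ℕ}

/-- Substitute each ε-symbol `ε_x` by `σ x`. -/
def subst (σ : ℕ → GTree S ar) : GTree S ar → GTree S ar
  | eps x => σ x
  | node f ts => node f (fun i => subst σ (ts i))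

/-- The multiset of ε-indices of a tree. -/
def epsIdx : GTree S ar → Multiset ℕ
  | eps x => {x}
  | node _ ts => ∑ i, epsIdx (ts i)

/-- `Inc_ε(z,t)`: increment every ε-index by `z`. -/
def inc (z : ℕ) (t : GTree S ar) : GTree S ar :=
  subst (fun x => eps (x + z)) t

/-- Composition `t ∘ (t₁,…,t_k)`: graft `ts_j` at the `j`-th smallest ε-index of `t`. -/
def compo (t : GTree S ar) (ts : List (GTree S ar)) : GTree S ar :=
  subst (fun x => ts.getD ((Multiset.sort (epsIdx t) (· ≤ ·)).idxOf x) (eps x)) t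

/-- The tree `α(ε₁,…,ε_k)` associated with a symbol `α`. -/
def symTree (f : S) : GTree S ar := node f (fun i => eps (i.1 + 1))

/-- Bottom-up quotient `d⁻¹(t)` of a tree `t` w.r.t. a tree `d`. -/
def quotT (d t : GTree S ar) : Set (GTree S ar) :=
  { u | epsIdx u = 1 ::ₘ (epsIdx t - epsIdx d).map (· + 1) ∧
        subst (fun j => if j = 1 then d else eps (j - 1)) u = t }

/-- Bottom-up quotient `d⁻¹(L)` of a language w.r.t. a tree. -/
def quotL (d : GTree S ar) (L : Set (GTree S ar)) : Set (GTree S ar) :=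
  ⋃ t ∈ L, quotT d t

def incL (z : ℕ) (L : Set (GTree S ar)) : Set (GTree S ar) := inc z '' L

/-- Composition of languages `L ∘ (L₁,…,L_k)`. -/
def compoL (L : Set (GTree S ar)) (Ls : List (Set (GTree S ar))) : Set (GTree S ar) :=
  { u | ∃ t ∈ L, ∃ ts : List (GTree S ar), List.Forall₂ (· ∈ ·) ts Ls ∧ u = compo t ts }

/-- Partial composition `t ∘₁ L'` at the first (smallest) ε-index. -/
def pcomp (t : GTree S ar) (L' : Set (GTree S ar)) : Set (GTree S ar) :=
  { u | ∃ t' ∈ L', u = compo t (t' :: ((Multiset.sort (epsIdx t) (· ≤ ·)).tail).map eps) }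

/-- Partial composition of languages `L ∘₁ L'`. -/
def pcompL (L L' : Set (GTree S ar)) : Set (GTree S ar) := ⋃ t ∈ L, pcomp t L'

/-- Tree substitution `t_{b ← L}` of the 0-ary symbol `b` by the language `L`. -/
def bsub [DecidableEq S] (b : S) (L : Set (GTree S ar)) : GTree S ar → Set (GTree S ar)
  | eps x => {eps x}
  | node f ts =>
      if f = b then L
      else { u | ∃ us : Fin (ar f) → GTree S ar, (∀ i, us i ∈ bsub b L (ts i)) ∧ u = node f us }

/-- `b`-product `L₁ ·_b L₂`. -/
def prodB [DecidableEq S] (L₁ : Set (GTree S ar)) (b : S) (L₂ : Set (GTree S ar)) :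
    Set (GTree S ar) :=
  ⋃ t ∈ L₁, bsub b L₂ t

/-- Iterated `b`-product `L^{n_b}`. -/
def iterB [DecidableEq S] (b : S) (L : Set (GTree S ar)) : ℕ → Set (GTree S ar)
  | 0 => {symTree b}
  | n + 1 => iterB b L n ∪ prodB L b (iterB b L n)

/-- `b`-closure `L^{*_b}`. -/
def closB [DecidableEq S] (b : S) (L : Set (GTree S ar)) : Set (GTree S ar) :=
  ⋃ n, iterB b L n

/-- Iterated composition `L^{n∘}` of a 1-homogeneous language of ε-index `{x}`. -/
def iterC (x : ℕ) (L : Set (GTree S ar)) : ℕ → Set (GTree S ar)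
  | 0 => {eps x}
  | n + 1 => iterC x L n ∪ pcompL (iterC x L n) L

/-- Composition closure `L^⊛`. -/
def closC (x : ℕ) (L : Set (GTree S ar)) : Set (GTree S ar) := ⋃ n, iterC x L n

end GTree

structure TAut (S : Type) (ar : S → ℕ) (Q : Type) where
  F : Set Q
  δ : (f : S) → (Fin (ar f) → Q) → Set Q

namespace TAut

variable {S : Type} {ar : S → ℕ} {Q : Type}

/-- The run function `Δ`, with environment `ρ` giving the possible states at ε-leaves. -/
def run (A : TAut S ar Q) (ρ : ℕ → Set Q) : GTree S ar → Set Q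
  | .eps x => ρ x
  | .node f ts => { q | ∃ qs : Fin (ar f) → Q, (∀ i, qs i ∈ run A ρ (ts i)) ∧ q ∈ A.δ f qs }

/-- The language recognized by `A` (a set of 0-ary trees). -/
def lang (A : TAut S ar Q) : Set (GTree S ar) :=
  { t | GTree.epsIdx t = 0 ∧ (run A (fun _ => ∅) t ∩ A.F).Nonempty }

/-- The top language `L^q(A)` of a state `q` (a set of unary trees of ε-index `{1}`). -/
def top (A : TAut S ar Q) (q : Q) : Set (GTree S ar) :=
  { t | GTree.epsIdx t = {1} ∧
        (run A (fun x => if x = 1 then {q} else ∅) t ∩ A.F).Nonempty }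

/-- Determinism of a tree automaton. -/
def Det (A : TAut S ar Q) : Prop :=
  ∀ (f : S) (qs : Fin (ar f) → Q), (A.δ f qs).Subsingleton

/-- Accessibility: every state is reached by some 0-ary tree. -/
def Accessible (A : TAut S ar Q) : Prop :=
  ∀ q : Q, ∃ t : GTree S ar, GTree.epsIdx t = 0 ∧ q ∈ run A (fun _ => ∅) t

end TAut

/-- The bottom-up quotient automaton `A_L`. -/
def AutL {S : Type} {ar : S → ℕ} (L : Set (GTree S ar)) : TAut S ar (Set (GTree S ar)) where
  F := { M | (∃ t : GTree S ar, M = GTree.quotL t L) ∧ GTree.eps 1 ∈ M }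
  δ := fun f Ms => { M | ∃ ts : Fin (ar f) → GTree S ar,
        (∀ i, Ms i = GTree.quotL (ts i) L) ∧ M = GTree.quotL (GTree.node f ts) L }


namespace GTree

variable {S : Type} {ar : S → ℕ}

lemma subst_congr {σ σ' : ℕ → GTree S ar} :
    ∀ {t : GTree S ar}, (∀ x ∈ epsIdx t, σ x = σ' x) → subst σ t = subst σ' t
  | eps x, h => h x (by simp [epsIdx])
  | node f ts, h => by
      simp only [subst]
      congr 1
      funext i
      exact subst_congr fun x hx =>
        h x (by simp only [epsIdx, Multiset.mem_sum]; exact ⟨i, Finset.mem_univ i, hx⟩)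

lemma epsIdx_subst (σ : ℕ → GTree S ar) :
    ∀ t : GTree S ar, epsIdx (subst σ t) = ((epsIdx t).map (fun x => epsIdx (σ x))).sum
  | eps x => by simp [subst, epsIdx]
  | node f ts => by
      simp only [subst, epsIdx]
      have : ∀ s : Finset (Fin (ar f)),
          ((∑ i ∈ s, epsIdx (ts i)).map (fun x => epsIdx (σ x))).sum
            = ∑ i ∈ s, ((epsIdx (ts i)).map (fun x => epsIdx (σ x))).sum := by
        intro s
        induction s using Finset.induction with
        | empty => simp
        | insert _ _ hi ih => simp [Finset.sum_insert hi, ih]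
      rw [this]
      exact Finset.sum_congr rfl fun i _ => epsIdx_subst σ (ts i)

lemma epsIdx_node_zero {f : S} {ts : Fin (ar f) → GTree S ar}
    (h : epsIdx (node f ts) = 0) (i : Fin (ar f)) : epsIdx (ts i) = 0 := by
  simp only [epsIdx] at h
  exact (Finset.sum_eq_zero_iff.mp h) i (Finset.mem_univ i)

lemma subst_eq_self (σ : ℕ → GTree S ar) :
    ∀ {t : GTree S ar}, epsIdx t = 0 → subst σ t = t
  | eps x, h => by simp [epsIdx] at h
  | node f ts, h => by
      simp only [subst]
      congr 1
      funext i
      exact subst_eq_self σ (epsIdx_node_zero h i)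

lemma epsIdx_subst_single {u : GTree S ar} (hu : epsIdx u = {1}) (σ : ℕ → GTree S ar) :
    epsIdx (subst σ u) = epsIdx (σ 1) := by
  rw [epsIdx_subst, hu]; simp

lemma subst_subst (σ σ' : ℕ → GTree S ar) :
    ∀ t : GTree S ar, subst σ' (subst σ t) = subst (fun x => subst σ' (σ x)) t
  | eps x => rfl
  | node f ts => by
      simp only [subst]
      congr 1
      funext i
      exact subst_subst σ σ' (ts i)

/-- The plugging substitution used in `quotT`. -/
def plug (d : GTree S ar) : ℕ → GTree S ar := fun j => if j = 1 then d else eps (j - 1)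

variable {L : Set (GTree S ar)}

lemma mem_quotL (hL : ∀ t ∈ L, epsIdx t = 0) {d u : GTree S ar} :
    u ∈ quotL d L ↔ epsIdx u = {1} ∧ subst (plug d) u ∈ L := by
  simp only [quotL, Set.mem_iUnion, quotT, Set.mem_setOf_eq]
  constructor
  · rintro ⟨t, htL, h1, h2⟩
    have h0 : epsIdx t = 0 := hL t htL
    rw [h0] at h1
    refine ⟨by simpa [zero_tsub] using h1, ?_⟩
    show subst _ u ∈ L
    rw [show plug d = fun j => if j = 1 then d else eps (j - 1) from rfl, h2]
    exact htL
  · rintro ⟨h1, h2⟩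
    refine ⟨subst (plug d) u, h2, ?_, rfl⟩
    have h0 : epsIdx (subst (plug d) u) = 0 := hL _ h2
    rw [h0]
    simpa [zero_tsub] using h1

lemma quotL_empty (hL : ∀ t ∈ L, epsIdx t = 0) {d : GTree S ar} (hd : epsIdx d ≠ 0) :
    quotL d L = ∅ := by
  ext u
  simp only [mem_quotL hL, Set.mem_empty_iff_false, iff_false, not_and]
  intro hu hmem
  have h0 := hL _ hmem
  rw [epsIdx_subst_single hu] at h0
  exact hd (by simpa [plug] using h0)

lemma plug_mem (hL : ∀ t ∈ L, epsIdx t = 0) {u : GTree S ar} (hu : epsIdx u = {1})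
    (f : S) (cs : Fin (ar f) → GTree S ar) (hcs : ∀ k, epsIdx (cs k) = 0)
    (i : Fin (ar f)) (x : GTree S ar) :
    subst (plug (node f (Function.update cs i (eps 1)))) u ∈ quotL x L ↔
      subst (plug (node f (Function.update cs i x))) u ∈ L := by
  rw [mem_quotL hL]
  have h1 : epsIdx (subst (plug (node f (Function.update cs i (eps 1)))) u) = {1} := by
    rw [epsIdx_subst_single hu]
    show epsIdx (node f (Function.update cs i (eps 1))) = {1}
    simp only [epsIdx]
    have hfun : (fun k => epsIdx (Function.update cs i (eps 1) k))
        = Function.update (fun k => epsIdx (cs k)) i ({1} : Multiset ℕ) := by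
      funext k
      exact Function.apply_update (fun _ t => epsIdx t) cs i (eps 1) k
    rw [hfun, Finset.sum_update_of_mem (Finset.mem_univ i)]
    rw [Finset.sum_eq_zero (fun k hk => hcs k)]
    simp
  have h2 : ∀ y : GTree S ar,
      subst (plug y) (subst (plug (node f (Function.update cs i (eps 1)))) u)
        = subst (plug (node f (Function.update cs i y))) u := by
    intro y
    rw [subst_subst]
    apply subst_congr
    intro z hz
    rw [hu, Multiset.mem_singleton] at hz
    subst hz
    show subst (plug y) (plug _ 1) = plug _ 1
    simp only [plug, if_pos rfl, ↓reduceIte, subst]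
    congr 1
    funext k
    by_cases hk : k = i
    · subst hk
      simp [Function.update_self, subst, plug]
    · simp [Function.update_of_ne hk, subst_eq_self _ (hcs k)]
  rw [h2 x]
  exact and_iff_right h1

lemma swap_mem (hL : ∀ t ∈ L, epsIdx t = 0) {u : GTree S ar} (hu : epsIdx u = {1})
    (f : S) (ds es : Fin (ar f) → GTree S ar)
    (hds : ∀ i, epsIdx (ds i) = 0) (hes : ∀ i, epsIdx (es i) = 0)
    (hq : ∀ i, quotL (ds i) L = quotL (es i) L) :
    subst (plug (node f ds)) u ∈ L ↔ subst (plug (node f es)) u ∈ L := by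
  have key : ∀ s : Finset (Fin (ar f)),
      (subst (plug (node f (fun i => if i ∈ s then es i else ds i))) u ∈ L ↔
        subst (plug (node f ds)) u ∈ L) := by
    intro s
    induction s using Finset.induction with
    | empty => simp
    | @insert i s hi ih =>
        set h : Fin (ar f) → GTree S ar := fun k => if k ∈ s then es k else ds k with hh
        have hhz : ∀ k, epsIdx (h k) = 0 := by
          intro k; simp only [hh]; split <;> [exact hes k; exact hds k]
        have hins : (fun k => if k ∈ insert i s then es k else ds k)
            = Function.update h i (es i) := by
          funext k
          by_cases hk : k = i
          · subst hk; simp [Function.update_self]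
          · simp [Function.update_of_ne hk, hh, hk, Finset.mem_insert]
        have hself : h = Function.update h i (ds i) := by
          have : h i = ds i := by simp [hh, hi]
          rw [← this, Function.update_eq_self]
        rw [hins, ← plug_mem hL hu f h hhz i (es i), ← hq i,
          plug_mem hL hu f h hhz i (ds i), ← hself, ih]
  have := key Finset.univ
  simpa using this.symm

lemma quotL_node_congr (hL : ∀ t ∈ L, epsIdx t = 0) (f : S)
    (ds es : Fin (ar f) → GTree S ar) (hds : ∀ i, epsIdx (ds i) = 0)
    (hq : ∀ i, quotL (ds i) L = quotL (es i) L) :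
    quotL (node f ds) L = quotL (node f es) L := by
  ext u
  rw [mem_quotL hL, mem_quotL hL]
  refine and_congr_right fun hu => ?_
  constructor
  · intro hmem
    have hes : ∀ i, epsIdx (es i) = 0 := by
      intro i
      by_contra hne
      have hempty : quotL (es i) L = ∅ := quotL_empty hL hne
      have hne' : (quotL (ds i) L).Nonempty := by
        refine ⟨subst (plug (node f (Function.update ds i (eps 1)))) u, ?_⟩
        rw [plug_mem hL hu f ds hds i (ds i), Function.update_eq_self]
        exact hmem
      rw [hq i, hempty] at hne'
      exact Set.not_nonempty_empty hne'
    exact (swap_mem hL hu f ds es hds hes hq).mp hmem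
  · intro hmem
    have h0 : epsIdx (subst (plug (node f es)) u) = 0 := hL _ hmem
    rw [epsIdx_subst_single hu] at h0
    have hes : ∀ i, epsIdx (es i) = 0 := by
      intro i
      exact epsIdx_node_zero (by simpa [plug] using h0) i
    exact (swap_mem hL hu f ds es hds hes hq).mpr hmem

end GTree

/-- the bottom-up quotient automaton `A_L` recognizes `L`, and its run on any
0-ary tree `t` is exactly the singleton `{t⁻¹(L)}`. -/
theorem autL_recognizes {S : Type} {ar : S → ℕ} (L : Set (GTree S ar))
    (hL : ∀ t ∈ L, GTree.epsIdx t = 0) :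
    TAut.lang (AutL L) = L ∧
    ∀ t : GTree S ar, GTree.epsIdx t = 0 →
      TAut.run (AutL L) (fun _ => ∅) t = {GTree.quotL t L} := by
  have run_eq : ∀ t : GTree S ar, GTree.epsIdx t = 0 →
      TAut.run (AutL L) (fun _ => ∅) t = {GTree.quotL t L} := by
    intro t
    induction t with
    | eps x => intro h; simp [GTree.epsIdx] at h
    | node f ts ih =>
        intro h
        have hts : ∀ i, GTree.epsIdx (ts i) = 0 := GTree.epsIdx_node_zero h
        ext M
        simp only [TAut.run, Set.mem_setOf_eq, Set.mem_singleton_iff]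
        constructor
        · rintro ⟨qs, hqs, hδ⟩
          simp only [AutL, Set.mem_setOf_eq] at hδ
          obtain ⟨ts', hts', rfl⟩ := hδ
          have hq : ∀ i, qs i = GTree.quotL (ts i) L := by
            intro i
            have := hqs i
            rw [ih i (hts i)] at this
            exact this
          exact (GTree.quotL_node_congr hL f ts ts' hts
            (fun i => by rw [← hq i, hts' i])).symm
        · rintro rfl
          exact ⟨fun i => GTree.quotL (ts i) L,
            fun i => by rw [ih i (hts i)]; rfl, ts, fun i => rfl, rfl⟩
  refine ⟨?_, run_eq⟩
  ext t
  simp only [TAut.lang, Set.mem_setOf_eq]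
  constructor
  · rintro ⟨h0, hne⟩
    rw [run_eq t h0] at hne
    obtain ⟨M, hM1, hM2⟩ := hne
    rw [Set.mem_singleton_iff] at hM1
    subst hM1
    have heps : GTree.eps 1 ∈ GTree.quotL t L := hM2.2
    rw [GTree.mem_quotL hL] at heps
    have : GTree.subst (GTree.plug t) (GTree.eps 1) = t := by
      simp [GTree.subst, GTree.plug]
    rw [this] at heps
    exact heps.2
  · intro ht
    have h0 : GTree.epsIdx t = 0 := hL t ht
    refine ⟨h0, ?_⟩
    rw [run_eq t h0]
    refine ⟨GTree.quotL t L, rfl, ⟨t, rfl⟩, ?_⟩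
    rw [GTree.mem_quotL hL]
    refine ⟨by simp [GTree.epsIdx], ?_⟩
    have : GTree.subst (GTree.plug t) (GTree.eps 1) = t := by
      simp [GTree.subst, GTree.plug]
    rwa [this]
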